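/- Under the block structure of the previous statement, the set of feasible f ∈ ℝ² (i.e., those making Ψ positive definite, given fixed A ≻ 0, B, C, D with M = D − BᵀA⁻¹B ≻ 0 and v = e − CᵀA⁻¹C > 0) is nonempty, open, convex, and bounded; in particular f₀ = BᵀA⁻¹C is always feasible. -/

import Mathlib

set_option maxRecDepth 4000

open Matrix

attribute [local instance] Matrix.normedAddCommGroup

theorem myPosDef_fromBlocks11 {m n : Type*} [Fintype m] [DecidableEq m] [Fintype n]
    {A : Matrix m m ℝ} (B : Matrix m n ℝ) (D : Matrix n n ℝ) (hA : A.PosDef) :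
    (fromBlocks A B Bᵀ D).PosDef ↔ (D - Bᵀ * A⁻¹ * B).PosDef := by
  haveI : Invertible A := A.invertibleOfIsUnitDet hA.det_pos.ne'.isUnit
  rw [← conjTranspose_eq_transpose_of_trivial B]
  rw [posDef_iff_dotProduct_mulVec, posDef_iff_dotProduct_mulVec]
  constructor
  · rintro ⟨h1, h2⟩
    refine ⟨(IsHermitian.fromBlocks₁₁ _ _ hA.1).mp h1, fun y hy => ?_⟩
    have hvec : (-((A⁻¹ * B) *ᵥ y) ⊕ᵥ y) ≠ 0 := by
      intro h0
      apply hy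
      funext i
      simpa using congrFun h0 (Sum.inr i)
    have := h2 hvec
    rw [dotProduct_mulVec, schur_complement_eq₁₁ B D _ _ hA.1, neg_add_cancel,
      dotProduct_zero, zero_add] at this
    rw [dotProduct_mulVec]
    exact this
  · rintro ⟨h1, h2⟩
    refine ⟨(IsHermitian.fromBlocks₁₁ _ _ hA.1).mpr h1, fun x hx => ?_⟩
    rw [dotProduct_mulVec, ← Sum.elim_comp_inl_inr x, schur_complement_eq₁₁ B D _ _ hA.1]
    by_cases hxr : x ∘ Sum.inr = 0
    · have hxl : x ∘ Sum.inl ≠ 0 := by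
        intro hxl
        apply hx
        rw [← Sum.elim_comp_inl_inr x, hxl, hxr]
        funext i; cases i <;> rfl
      rw [hxr]
      simp only [mulVec_zero, add_zero, star_zero, zero_vecMul, zero_dotProduct]
      rw [← dotProduct_mulVec]
      exact hA.dotProduct_mulVec_pos hxl
    · have t1 : 0 ≤ star (x ∘ Sum.inl + (A⁻¹ * B) *ᵥ (x ∘ Sum.inr)) ᵥ* A ⬝ᵥ
          (x ∘ Sum.inl + (A⁻¹ * B) *ᵥ (x ∘ Sum.inr)) := by
        rw [← dotProduct_mulVec]
        exact hA.posSemidef.dotProduct_mulVec_nonneg _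
      have t2 : 0 < star (x ∘ Sum.inr) ᵥ* (D - Bᴴ * A⁻¹ * B) ⬝ᵥ (x ∘ Sum.inr) := by
        rw [← dotProduct_mulVec]
        exact h2 hxr
      linarith

theorem myPosDef_one_iff (M : Matrix (Fin 1) (Fin 1) ℝ) : M.PosDef ↔ 0 < M 0 0 := by
  rw [posDef_iff_dotProduct_mulVec]
  constructor
  · intro h
    have := h.2 (x := fun _ => 1) (by intro h0; simpa using congrFun h0 0)
    simpa [dotProduct, mulVec] using this
  · intro h
    refine ⟨?_, fun x hx => ?_⟩
    · ext i j
      fin_cases i <;> fin_cases j <;> simp [conjTranspose_apply]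
    · have h0 : x 0 ≠ 0 := by
        intro h0; apply hx; funext i; fin_cases i; exact h0
      simp only [dotProduct, mulVec, Fin.sum_univ_one, star_trivial]
      nlinarith [mul_pos h (mul_self_pos.mpr h0)]

theorem myEntry_quad {k : Type*} [Fintype k] (K : Matrix k k ℝ) (x : Matrix k (Fin 1) ℝ) :
    (xᵀ * K * x) 0 0 = (fun i => x i 0) ⬝ᵥ K *ᵥ (fun i => x i 0) := by
  simp only [mul_apply, transpose_apply, dotProduct, mulVec, Finset.sum_mul, Finset.mul_sum]
  rw [Finset.sum_comm]
  apply Finset.sum_congr rfl; intros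
  apply Finset.sum_congr rfl; intros
  ring

/-- The set of feasible cross-block covariances `f` (those making the block
matrix `Ψ = [[A,B,C],[Bᵀ,D,f],[Cᵀ,fᵀ,e]]` positive definite, with
`A ≻ 0`, `M = D − BᵀA⁻¹B ≻ 0`, `v = e − CᵀA⁻¹C > 0`) is nonempty, open,
convex, and bounded; in particular `f₀ = BᵀA⁻¹C` is feasible. -/
theorem feasible_cross_block_set_properties
    (A : Matrix (Fin 3) (Fin 3) ℝ) (hA : A.PosDef)
    (B : Matrix (Fin 3) (Fin 2) ℝ) (C : Matrix (Fin 3) (Fin 1) ℝ)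
    (D : Matrix (Fin 2) (Fin 2) ℝ) (hD : D.IsSymm) (e : ℝ)
    (hM : (D - Bᵀ * A⁻¹ * B).PosDef)
    (hv : 0 < e - (Cᵀ * A⁻¹ * C) 0 0) :
    (let S : Set (Matrix (Fin 2) (Fin 1) ℝ) :=
      {f | (Matrix.fromBlocks (Matrix.fromBlocks A B Bᵀ D)
              (Matrix.fromRows C f) (Matrix.fromRows C f)ᵀ
              (Matrix.of fun _ _ : Fin 1 => e)).PosDef}
    S.Nonempty ∧ IsOpen S ∧ Convex ℝ S ∧ Bornology.IsBounded S
      ∧ Bᵀ * A⁻¹ * C ∈ S) := by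
  intro S
  set P : Matrix (Fin 3 ⊕ Fin 2) (Fin 3 ⊕ Fin 2) ℝ := fromBlocks A B Bᵀ D with hPdef
  have hP : P.PosDef := (myPosDef_fromBlocks11 B D hA).mpr hM
  have hPinv : P⁻¹.PosDef := hP.inv
  set q : Matrix (Fin 2) (Fin 1) ℝ → ℝ :=
    fun f => (fun i => fromRows C f i 0) ⬝ᵥ P⁻¹ *ᵥ (fun i => fromRows C f i 0) with hqdef
  have hSeq : S = {f | q f < e} := by
    ext f
    show (fromBlocks P (fromRows C f) (fromRows C f)ᵀ
        (Matrix.of fun _ _ : Fin 1 => e)).PosDef ↔ q f < e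
    rw [myPosDef_fromBlocks11 _ _ hP, myPosDef_one_iff, Matrix.sub_apply, myEntry_quad]
    exact sub_pos
  haveI : Invertible P := P.invertibleOfIsUnitDet hP.det_pos.ne'.isUnit
  have hAinv : IsUnit A.det := hA.det_pos.ne'.isUnit
  -- membership of f₀
  have hmem : q (Bᵀ * A⁻¹ * C) < e := by
    set h : (Fin 3 ⊕ Fin 2) → ℝ := Sum.elim (fun i => (A⁻¹ * C) i 0) 0 with hhdef
    have hu0 : (fun i => fromRows C (Bᵀ * A⁻¹ * C) i 0) = P *ᵥ h := by
      funext i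
      cases i with
      | inl i =>
        have hAC : A * (A⁻¹ * C) = C := by
          rw [← Matrix.mul_assoc, Matrix.mul_nonsing_inv _ hAinv, Matrix.one_mul]
        have h2 : (P *ᵥ h) (Sum.inl i) = (A * (A⁻¹ * C)) i 0 := by
          simp [hPdef, hhdef, mulVec, dotProduct, Fintype.sum_sum_type, fromBlocks, mul_apply]
        rw [h2, hAC]
        rfl
      | inr j =>
        have h2 : (P *ᵥ h) (Sum.inr j) = (Bᵀ * (A⁻¹ * C)) j 0 := by
          simp [hPdef, hhdef, mulVec, dotProduct, Fintype.sum_sum_type, fromBlocks, mul_apply]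
        rw [h2, ← Matrix.mul_assoc]
        rfl
    have hq0 : q (Bᵀ * A⁻¹ * C) = (Cᵀ * A⁻¹ * C) 0 0 := by
      simp only [hqdef]
      rw [hu0, mulVec_mulVec, Matrix.nonsing_inv_mul P hP.det_pos.ne'.isUnit, Matrix.one_mulVec,
        ← hu0]
      rw [Matrix.mul_assoc]
      simp only [dotProduct, Fintype.sum_sum_type, hhdef, fromRows, mul_apply, of_apply,
        Sum.elim_inl, Sum.elim_inr, Pi.zero_apply, mul_zero, Finset.sum_const_zero, add_zero,
        transpose_apply, Finset.mul_sum, Finset.sum_mul]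
      rw [Finset.sum_comm]
      apply Finset.sum_congr rfl; intros
      apply Finset.sum_congr rfl; intros
      show C _ 0 * (_ * _) = _
      ring
    rw [hq0]; linarith
  -- openness
  have hopen : IsOpen {f : Matrix (Fin 2) (Fin 1) ℝ | q f < e} := by
    have h1 : Continuous fun f : Matrix (Fin 2) (Fin 1) ℝ => fromRows C f := by
      apply continuous_matrix
      intro i j
      cases i with
      | inl i => exact continuous_const
      | inr i => exact (continuous_apply j).comp (continuous_apply i)
    have h2 : Continuous fun f : Matrix (Fin 2) (Fin 1) ℝ => (fun i => fromRows C f i 0) := by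
      exact continuous_pi fun i => h1.matrix_elem i 0
    have hcont : Continuous q := by
      simp only [hqdef]
      exact h2.dotProduct (continuous_const.matrix_mulVec h2)
    exact isOpen_lt hcont continuous_const
  -- convexity
  have hconv : Convex ℝ {f : Matrix (Fin 2) (Fin 1) ℝ | q f < e} := by
    intro f1 h1 f2 h2 a b ha hb hab
    simp only [Set.mem_setOf_eq] at h1 h2 ⊢
    set x : (Fin 3 ⊕ Fin 2) → ℝ := fun i => fromRows C f1 i 0 with hxdef
    set y : (Fin 3 ⊕ Fin 2) → ℝ := fun i => fromRows C f2 i 0 with hydef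
    have hz := hPinv.posSemidef.dotProduct_mulVec_nonneg (x - y)
    rw [star_trivial] at hz
    have huf : (fun i => fromRows C (a • f1 + b • f2) i 0) = a • x + b • y := by
      funext i
      cases i with
      | inl i =>
        show C i 0 = a • x (Sum.inl i) + b • y (Sum.inl i)
        show C i 0 = a * C i 0 + b * C i 0
        rw [← add_mul, hab, one_mul]
      | inr i =>
        show (a • f1 + b • f2) i 0 = a * f1 i 0 + b * f2 i 0
        simp
    have hgoal : q (a • f1 + b • f2) = (a • x + b • y) ⬝ᵥ P⁻¹ *ᵥ (a • x + b • y) := by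
      simp only [hqdef]; rw [huf]
    have hx1 : x ⬝ᵥ P⁻¹ *ᵥ x < e := h1
    have hy1 : y ⬝ᵥ P⁻¹ *ᵥ y < e := h2
    rw [hgoal]
    simp only [smul_dotProduct, dotProduct_smul, add_dotProduct, dotProduct_add, mulVec_add,
      mulVec_smul, smul_eq_mul, sub_dotProduct, dotProduct_sub, mulVec_sub] at hz ⊢
    have hb' : b = 1 - a := by linarith
    subst hb'
    rcases eq_or_lt_of_le ha with h0|h0
    · rw [← h0]
      norm_num
      linarith
    · rcases eq_or_lt_of_le hb with h1'|h1'
      · have ha1 : a = 1 := by linarith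
        rw [ha1]
        norm_num
        linarith
      · nlinarith [mul_nonneg ha hb, hz, mul_lt_mul_of_pos_left hx1 h0,
          mul_lt_mul_of_pos_left hy1 h1']
  -- boundedness
  obtain ⟨R, hR⟩ : ∃ R : Matrix (Fin 3 ⊕ Fin 2) (Fin 3 ⊕ Fin 2) ℝ, P⁻¹ = Rᴴ * R := by
    open scoped MatrixOrder in
    exact CStarAlgebra.nonneg_iff_eq_star_mul_self.mp (nonneg_iff_posSemidef.mpr hPinv.posSemidef)
  rw [conjTranspose_eq_transpose_of_trivial] at hR
  have hdetR : IsUnit R.det := by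
    have hd : (0:ℝ) < P⁻¹.det := hPinv.det_pos
    rw [hR, det_mul, det_transpose] at hd
    exact isUnit_iff_ne_zero.mpr (by nlinarith)
  have hRinv : R⁻¹ * R = 1 := nonsing_inv_mul R hdetR
  have hbdd : Bornology.IsBounded {f : Matrix (Fin 2) (Fin 1) ℝ | q f < e} := by
    rw [isBounded_iff_forall_norm_le]
    set c : ℝ := (∑ i : Fin 3 ⊕ Fin 2, ∑ k : Fin 3 ⊕ Fin 2, |R⁻¹ i k|) * Real.sqrt e with hcdef
    have hc0 : 0 ≤ c := mul_nonneg
      (Finset.sum_nonneg fun i _ => Finset.sum_nonneg fun k _ => abs_nonneg _)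
      (Real.sqrt_nonneg _)
    refine ⟨c, fun f hf => ?_⟩
    simp only [Set.mem_setOf_eq] at hf
    set x : (Fin 3 ⊕ Fin 2) → ℝ := fun i => fromRows C f i 0 with hxdef
    have hqf : x ⬝ᵥ P⁻¹ *ᵥ x < e := hf
    have hqw : (R *ᵥ x) ⬝ᵥ (R *ᵥ x) < e := by
      have hh : x ⬝ᵥ P⁻¹ *ᵥ x = (R *ᵥ x) ⬝ᵥ (R *ᵥ x) := by
        rw [hR, ← mulVec_mulVec, dotProduct_mulVec, vecMul_transpose]
      linarith
    have hwk : ∀ k, |(R *ᵥ x) k| ≤ Real.sqrt e := by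
      intro k
      have hle : (R *ᵥ x) k * (R *ᵥ x) k ≤ (R *ᵥ x) ⬝ᵥ (R *ᵥ x) :=
        Finset.single_le_sum (f := fun i => (R *ᵥ x) i * (R *ᵥ x) i)
          (fun i _ => mul_self_nonneg _) (Finset.mem_univ k)
      have h2 : (R *ᵥ x) k ^ 2 ≤ e := by rw [sq]; linarith
      calc |(R *ᵥ x) k| = Real.sqrt ((R *ᵥ x) k ^ 2) := (Real.sqrt_sq_eq_abs _).symm
        _ ≤ Real.sqrt e := Real.sqrt_le_sqrt h2
    have hxw : x = R⁻¹ *ᵥ (R *ᵥ x) := by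
      rw [mulVec_mulVec, hRinv, one_mulVec]
    rw [Matrix.norm_le_iff hc0]
    intro i j
    have hj : j = 0 := Subsingleton.elim j 0
    subst hj
    have hfi : f i 0 = x (Sum.inr i) := rfl
    rw [Real.norm_eq_abs, hfi, hxw]
    calc |(R⁻¹ *ᵥ (R *ᵥ x)) (Sum.inr i)| = |∑ k, R⁻¹ (Sum.inr i) k * (R *ᵥ x) k| := rfl
      _ ≤ ∑ k, |R⁻¹ (Sum.inr i) k * (R *ᵥ x) k| := Finset.abs_sum_le_sum_abs _ _
      _ ≤ ∑ k, |R⁻¹ (Sum.inr i) k| * Real.sqrt e := by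
          apply Finset.sum_le_sum
          intro k _
          rw [abs_mul]
          exact mul_le_mul_of_nonneg_left (hwk k) (abs_nonneg _)
      _ = (∑ k, |R⁻¹ (Sum.inr i) k|) * Real.sqrt e := by rw [Finset.sum_mul]
      _ ≤ c := by
          rw [hcdef]
          apply mul_le_mul_of_nonneg_right _ (Real.sqrt_nonneg _)
          exact Finset.single_le_sum (f := fun i => ∑ k, |R⁻¹ i k|)
            (fun i _ => Finset.sum_nonneg fun k _ => abs_nonneg _) (Finset.mem_univ _)
  rw [hSeq]
  exact ⟨⟨_, hmem⟩, hopen, hconv, hbdd, hmem⟩
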